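/- Fix λ > 1. For integers l ≥ 2 and k with 1 ≤ k ≤ l−1, the difference of nonlocal perimeters Per_λ(𝒬_l^k) − Per_λ(𝒬_l) equals 2k·ζ(λ, l+1) + 2 Σ_{i=1}^{k} ζ(λ,i), where 𝒬_l is the l×l square polyomino and 𝒬_l^k is the l×l square with a k-protuberance (a 1×k strip) attached along one side. -/

import Mathlib

/-- The bi-axial fractional interaction between two lattice sites. -/
noncomputable def biAxialWeight (lam : ℝ) (x y : ℤ × ℤ) : ℝ :=
  if x.1 = y.1 ∧ x.2 ≠ y.2 then 1 / ((|x.2 - y.2| : ℤ) : ℝ) ^ lam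
  else if x.2 = y.2 ∧ x.1 ≠ y.1 then 1 / ((|x.1 - y.1| : ℤ) : ℝ) ^ lam
  else 0

/-- The nonlocal bi-axial perimeter of a polyomino, identified with the finite
set of centers of its unit squares. -/
noncomputable def nonlocalPer (lam : ℝ) (P : Finset (ℤ × ℤ)) : ℝ :=
  ∑ x ∈ P, ∑' y : {y : ℤ × ℤ // y ∉ P}, biAxialWeight lam x (y : ℤ × ℤ)

/-- The Hurwitz zeta function ζ(λ, i) = Σ_{r≥0} (r+i)^{-λ} as a real series. -/
noncomputable def hzeta (lam : ℝ) (i : ℕ) : ℝ := ∑' r : ℕ, 1 / ((r : ℝ) + i) ^ lam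

/-- The l×l square polyomino. -/
noncomputable def squareP (l : ℕ) : Finset (ℤ × ℤ) := Finset.Ico (0 : ℤ) l ×ˢ Finset.Ico (0 : ℤ) l

/-- The l×l square polyomino with a k-protuberance (a 1×k strip of unit squares)
attached along one of its sides. -/
noncomputable def squareProtP (l k : ℕ) : Finset (ℤ × ℤ) :=
  squareP l ∪ Finset.Ico (0 : ℤ) k ×ˢ ({(l : ℤ)} : Finset ℤ)

noncomputable def cfun (lam : ℝ) (d : ℤ) : ℝ := 1 / ((|d| : ℤ) : ℝ) ^ lam

variable {lam : ℝ}

lemma cfun_zero (hlam : 1 < lam) : cfun lam 0 = 0 := by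
  simp [cfun, Real.zero_rpow (by linarith : lam ≠ 0)]

lemma cfun_neg (d : ℤ) : cfun lam (-d) = cfun lam d := by simp [cfun]

lemma cfun_natCast (n : ℕ) : cfun lam (n : ℤ) = 1 / (n : ℝ) ^ lam := by
  simp [cfun]

lemma hz_summable (hlam : 1 < lam) (i : ℕ) :
    Summable (fun r : ℕ => 1 / ((r : ℝ) + i) ^ lam) := by
  have h : (fun r : ℕ => 1 / ((r : ℝ) + i) ^ lam)
      = fun r : ℕ => 1 / (((r + i : ℕ) : ℝ)) ^ lam := by
    funext r; push_cast; ring_nf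
  rw [h]
  exact (summable_nat_add_iff i).mpr (Real.summable_one_div_nat_rpow.mpr hlam)

lemma hz_succ (hlam : 1 < lam) (i : ℕ) :
    hzeta lam i = 1 / (i : ℝ) ^ lam + hzeta lam (i + 1) := by
  unfold hzeta
  rw [Summable.tsum_eq_zero_add (hz_summable hlam i)]
  congr 1
  · norm_num
  · apply tsum_congr; intro r; push_cast; ring_nf


lemma hz_one_eq (hlam : 1 < lam) (n : ℕ) :
    hzeta lam 1 = (∑ i ∈ Finset.Icc 1 n, 1 / (i : ℝ) ^ lam) + hzeta lam (n + 1) := by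
  induction n with
  | zero => simp
  | succ n ih =>
      rw [ih, hz_succ hlam (n + 1)]
      rw [show Finset.Icc 1 (n + 1) = insert (n + 1) (Finset.Icc 1 n) by
        ext x; simp; omega]
      rw [Finset.sum_insert (by simp)]
      push_cast; ring

lemma cnat_eq : (fun n : ℕ => cfun lam (n : ℤ)) = fun n : ℕ => 1 / (n : ℝ) ^ lam := by
  funext n; exact cfun_natCast n

lemma cneg_eq : (fun n : ℕ => cfun lam (-((n : ℤ) + 1))) = fun n : ℕ => 1 / ((n : ℝ) + 1) ^ lam := by
  funext n
  rw [cfun_neg, show ((n : ℤ) + 1) = ((n + 1 : ℕ) : ℤ) by push_cast; ring, cfun_natCast]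
  push_cast; ring_nf

lemma csummable_nat (hlam : 1 < lam) : Summable (fun n : ℕ => cfun lam (n : ℤ)) := by
  rw [cnat_eq]; exact Real.summable_one_div_nat_rpow.mpr hlam

lemma csummable_neg (hlam : 1 < lam) : Summable (fun n : ℕ => cfun lam (-((n : ℤ) + 1))) := by
  rw [cneg_eq]
  have := hz_summable hlam 1
  simpa using this

lemma csummable (hlam : 1 < lam) : Summable (cfun lam) :=
  Summable.of_nat_of_neg_add_one (csummable_nat hlam) (csummable_neg hlam)

lemma ctsum (hlam : 1 < lam) : ∑' d : ℤ, cfun lam d = 2 * hzeta lam 1 := by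
  rw [tsum_of_nat_of_neg_add_one (csummable_nat hlam) (csummable_neg hlam)]
  have h1 : ∑' n : ℕ, cfun lam (n : ℤ) = hzeta lam 1 := by
    rw [cnat_eq, Summable.tsum_eq_zero_add (Real.summable_one_div_nat_rpow.mpr hlam)]
    simp only [Nat.cast_zero, Real.zero_rpow (by linarith : lam ≠ 0)]
    rw [hzeta, div_zero, zero_add]
    apply tsum_congr; intro r; push_cast; ring_nf
  have h2 : ∑' n : ℕ, cfun lam (-((n : ℤ) + 1)) = hzeta lam 1 := by
    rw [cneg_eq, hzeta]
    apply tsum_congr; intro r; norm_num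
  rw [h1, h2]; ring

lemma csummable_shift (hlam : 1 < lam) (a : ℤ) :
    Summable (fun q : ℤ => cfun lam (q - a)) :=
  (csummable hlam).comp_injective (fun x y h => by simpa using congrArg (· + a) h)

lemma ctsum_shift (hlam : 1 < lam) (a : ℤ) :
    ∑' q : ℤ, cfun lam (q - a) = 2 * hzeta lam 1 := by
  have h := (Equiv.subRight a).tsum_eq (cfun lam)
  simp only [Equiv.subRight_apply] at h
  rw [h]; exact ctsum hlam


lemma w_eq (hlam : 1 < lam) (x y : ℤ × ℤ) :
    biAxialWeight lam x y =
      (if y.1 = x.1 then cfun lam (y.2 - x.2) else 0)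
      + (if y.2 = x.2 then cfun lam (y.1 - x.1) else 0) := by
  unfold biAxialWeight cfun
  have hz : ((|(0 : ℤ)| : ℤ) : ℝ) ^ lam = 0 := by
    simp [Real.zero_rpow (by linarith : lam ≠ 0)]
  by_cases h1 : x.1 = y.1 <;> by_cases h2 : x.2 = y.2
  · rw [if_neg (by tauto), if_neg (by tauto), if_pos h1.symm, if_pos h2.symm,
      h1, h2, sub_self, sub_self, hz]
    norm_num
  · rw [if_pos ⟨h1, h2⟩, if_pos h1.symm, if_neg (fun h => h2 h.symm),
      abs_sub_comm]
    ring
  · rw [if_neg (by tauto), if_pos ⟨h2, h1⟩, if_neg (fun h => h1 h.symm),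
      if_pos h2.symm, abs_sub_comm]
    ring
  · rw [if_neg (by tauto), if_neg (by tauto), if_neg (fun h => h1 h.symm),
      if_neg (fun h => h2 h.symm)]
    norm_num

lemma col_summable (hlam : 1 < lam) (x : ℤ × ℤ) :
    Summable (fun y : ℤ × ℤ => if y.1 = x.1 then cfun lam (y.2 - x.2) else 0) := by
  set f : ℤ × ℤ → ℝ := fun y => if y.1 = x.1 then cfun lam (y.2 - x.2) else 0 with hf
  have hg : Function.Injective (fun m : ℤ => ((x.1, m) : ℤ × ℤ)) := by
    intro a b h; simpa using congrArg Prod.snd h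
  have hsupp : ∀ y ∉ Set.range (fun m : ℤ => ((x.1, m) : ℤ × ℤ)), f y = 0 := by
    rintro y hy
    rw [hf]
    simp only
    rw [if_neg]
    intro h
    exact hy ⟨y.2, by simp [Prod.ext_iff, h]⟩
  have := (hg.summable_iff hsupp).mp ?_
  · exact this
  · simp only [Function.comp_def, hf]
    simpa using csummable_shift hlam x.2

lemma col_tsum (hlam : 1 < lam) (x : ℤ × ℤ) :
    ∑' y : ℤ × ℤ, (if y.1 = x.1 then cfun lam (y.2 - x.2) else 0) = 2 * hzeta lam 1 := by
  set f : ℤ × ℤ → ℝ := fun y => if y.1 = x.1 then cfun lam (y.2 - x.2) else 0 with hf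
  have hg : Function.Injective (fun m : ℤ => ((x.1, m) : ℤ × ℤ)) := by
    intro a b h; simpa using congrArg Prod.snd h
  have hsupp : Function.support f ⊆ Set.range (fun m : ℤ => ((x.1, m) : ℤ × ℤ)) := by
    intro y hy
    by_contra hc
    apply hy
    rw [hf]; simp only
    rw [if_neg]
    intro h
    exact hc ⟨y.2, by simp [Prod.ext_iff, h]⟩
  have h := hg.tsum_eq hsupp
  rw [← h]
  have : (fun m : ℤ => f (x.1, m)) = fun m : ℤ => cfun lam (m - x.2) := by
    funext m; simp [hf]
  rw [show ∑' m : ℤ, f (x.1, m) = ∑' m : ℤ, cfun lam (m - x.2) from tsum_congr fun m => by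
    simp [hf]]
  exact ctsum_shift hlam x.2

lemma row_summable (hlam : 1 < lam) (x : ℤ × ℤ) :
    Summable (fun y : ℤ × ℤ => if y.2 = x.2 then cfun lam (y.1 - x.1) else 0) := by
  set f : ℤ × ℤ → ℝ := fun y => if y.2 = x.2 then cfun lam (y.1 - x.1) else 0 with hf
  have hg : Function.Injective (fun m : ℤ => ((m, x.2) : ℤ × ℤ)) := by
    intro a b h; simpa using congrArg Prod.fst h
  have hsupp : ∀ y ∉ Set.range (fun m : ℤ => ((m, x.2) : ℤ × ℤ)), f y = 0 := by
    rintro y hy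
    rw [hf]; simp only
    rw [if_neg]
    intro h
    exact hy ⟨y.1, by simp [Prod.ext_iff, h]⟩
  have := (hg.summable_iff hsupp).mp ?_
  · exact this
  · simp only [Function.comp_def, hf]
    simpa using csummable_shift hlam x.1

lemma row_tsum (hlam : 1 < lam) (x : ℤ × ℤ) :
    ∑' y : ℤ × ℤ, (if y.2 = x.2 then cfun lam (y.1 - x.1) else 0) = 2 * hzeta lam 1 := by
  set f : ℤ × ℤ → ℝ := fun y => if y.2 = x.2 then cfun lam (y.1 - x.1) else 0 with hf
  have hg : Function.Injective (fun m : ℤ => ((m, x.2) : ℤ × ℤ)) := by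
    intro a b h; simpa using congrArg Prod.fst h
  have hsupp : Function.support f ⊆ Set.range (fun m : ℤ => ((m, x.2) : ℤ × ℤ)) := by
    intro y hy
    by_contra hc
    apply hy
    rw [hf]; simp only
    rw [if_neg]
    intro h
    exact hc ⟨y.1, by simp [Prod.ext_iff, h]⟩
  have h := hg.tsum_eq hsupp
  rw [← h]
  rw [show ∑' m : ℤ, f (m, x.2) = ∑' m : ℤ, cfun lam (m - x.1) from tsum_congr fun m => by
    simp [hf]]
  exact ctsum_shift hlam x.1

lemma w_summable (hlam : 1 < lam) (x : ℤ × ℤ) : Summable (biAxialWeight lam x) := by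
  rw [show biAxialWeight lam x = fun y =>
      (if y.1 = x.1 then cfun lam (y.2 - x.2) else 0)
      + (if y.2 = x.2 then cfun lam (y.1 - x.1) else 0) from funext (w_eq hlam x)]
  exact (col_summable hlam x).add (row_summable hlam x)

lemma w_tsum (hlam : 1 < lam) (x : ℤ × ℤ) :
    ∑' y : ℤ × ℤ, biAxialWeight lam x y = 4 * hzeta lam 1 := by
  rw [show (fun y => biAxialWeight lam x y) = fun y =>
      (if y.1 = x.1 then cfun lam (y.2 - x.2) else 0)
      + (if y.2 = x.2 then cfun lam (y.1 - x.1) else 0) from funext (w_eq hlam x)]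
  rw [Summable.tsum_add (col_summable hlam x) (row_summable hlam x), col_tsum hlam x, row_tsum hlam x]
  ring

lemma tsum_compl_eq (hlam : 1 < lam) (Q : Finset (ℤ × ℤ)) (x : ℤ × ℤ) :
    ∑' y : {y : ℤ × ℤ // y ∉ Q}, biAxialWeight lam x (y : ℤ × ℤ)
      = 4 * hzeta lam 1 - ∑ y ∈ Q, biAxialWeight lam x y := by
  have hs := w_summable hlam x
  have h := Summable.tsum_add_tsum_compl (f := biAxialWeight lam x) (s := (Q : Set (ℤ × ℤ)))
    (hs.subtype _) (hs.subtype _)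
  rw [Finset.tsum_subtype'] at h
  have he : ∑' y : {y : ℤ × ℤ // y ∉ Q}, biAxialWeight lam x (y : ℤ × ℤ)
      = ∑' y : ↥((Q : Set (ℤ × ℤ))ᶜ), biAxialWeight lam x (y : ℤ × ℤ) := by
    apply tsum_congr_set_coe
    ext y; exact Iff.rfl
  rw [he]
  rw [w_tsum hlam x] at h
  linarith

noncomputable def pSum (lam : ℝ) (n : ℕ) : ℝ := ∑ i ∈ Finset.Icc 1 n, 1 / (i : ℝ) ^ lam

lemma hz_one_eq' (hlam : 1 < lam) (n : ℕ) :
    hzeta lam 1 = pSum lam n + hzeta lam (n + 1) := hz_one_eq hlam n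

lemma L1 (n : ℕ) : ∑ q ∈ Finset.Ico (1 : ℤ) ((n : ℤ) + 1), cfun lam q = pSum lam n := by
  induction n with
  | zero => simp [pSum]
  | succ n ih =>
      have hins : Finset.Ico (1 : ℤ) ((n : ℤ) + 1 + 1) =
          insert ((n : ℤ) + 1) (Finset.Ico (1 : ℤ) ((n : ℤ) + 1)) := by
        ext x; simp
      rw [show ((n + 1 : ℕ) : ℤ) + 1 = (n : ℤ) + 1 + 1 by push_cast; ring, hins,
        Finset.sum_insert (by simp), ih]
      have : cfun lam ((n : ℤ) + 1) = 1 / ((n + 1 : ℕ) : ℝ) ^ lam := by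
        rw [show ((n : ℤ) + 1) = ((n + 1 : ℕ) : ℤ) by push_cast; ring, cfun_natCast]
      rw [this]
      unfold pSum
      rw [show Finset.Icc 1 (n + 1) = insert (n + 1) (Finset.Icc 1 n) by ext x; simp; omega,
        Finset.sum_insert (by simp)]

lemma Csum (n : ℕ) : ∑ q ∈ Finset.Ico (0 : ℤ) (n : ℤ), cfun lam (q - n) = pSum lam n := by
  have h1 : ∑ q ∈ Finset.Ico (0 : ℤ) (n : ℤ), cfun lam (q - n)
      = ∑ x ∈ Finset.Ico (0 + -(n:ℤ)) ((n:ℤ) + -(n:ℤ)), cfun lam x := by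
    rw [← Finset.sum_Ico_add' (cfun lam) (0 : ℤ) (n : ℤ) (-(n:ℤ))]
    apply Finset.sum_congr rfl; intro q _; ring_nf
  rw [h1]
  have h2 : ∑ x ∈ Finset.Ico (0 + -(n:ℤ)) ((n:ℤ) + -(n:ℤ)), cfun lam x
      = ∑ q ∈ Finset.Ico (1 : ℤ) ((n : ℤ) + 1), cfun lam q := by
    apply Finset.sum_nbij' (i := fun x => -x) (j := fun x => -x)
    · intro a ha; simp at ha ⊢; omega
    · intro a ha; simp at ha ⊢; omega
    · intro a _; ring
    · intro a _; ring
    · intro a _; rw [← cfun_neg]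
  rw [h2, L1]

lemma Dsum (hlam : 1 < lam) (n : ℕ) (hn : 1 ≤ n) :
    ∑ q ∈ Finset.Ico (0 : ℤ) (n : ℤ), cfun lam q = pSum lam (n - 1) := by
  rw [show Finset.Ico (0 : ℤ) (n : ℤ) = insert 0 (Finset.Ico (1 : ℤ) (n : ℤ)) by
      ext x; simp; omega,
    Finset.sum_insert (by simp)]
  rw [show (n : ℤ) = ((n - 1 : ℕ) : ℤ) + 1 by omega, L1, cfun_zero hlam]
  ring

lemma Rsum (hlam : 1 < lam) (j k : ℕ) (hj : j < k) :
    ∑ m ∈ Finset.Ico (0 : ℤ) (k : ℤ), cfun lam (m - j)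
      = pSum lam j + pSum lam (k - 1 - j) := by
  rw [← Finset.Ico_union_Ico_eq_Ico (by positivity : (0:ℤ) ≤ (j:ℤ)) (by exact_mod_cast hj.le),
    Finset.sum_union (Finset.Ico_disjoint_Ico_consecutive _ _ _)]
  congr 1
  · exact Csum j
  · have h1 : ∑ m ∈ Finset.Ico (j : ℤ) (k : ℤ), cfun lam (m - j)
        = ∑ x ∈ Finset.Ico ((j:ℤ) + -(j:ℤ)) ((k:ℤ) + -(j:ℤ)), cfun lam x := by
      rw [← Finset.sum_Ico_add' (cfun lam) (j : ℤ) (k : ℤ) (-(j:ℤ))]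
      apply Finset.sum_congr rfl; intro q _; ring_nf
    rw [h1, show ((j:ℤ) + -(j:ℤ)) = (0:ℤ) by ring,
      show ((k:ℤ) + -(j:ℤ)) = ((k - j : ℕ) : ℤ) by omega,
      Dsum hlam (k - j) (by omega)]
    congr 1
    omega

lemma inner_P (hlam : 1 < lam) (l j : ℕ) (hj : j < l) :
    ∑ y ∈ squareP l, biAxialWeight lam ((j : ℤ), (l : ℤ)) y = pSum lam l := by
  unfold squareP
  rw [Finset.sum_product]
  have step : ∀ p ∈ Finset.Ico (0:ℤ) (l:ℤ),
      ∑ q ∈ Finset.Ico (0:ℤ) (l:ℤ), biAxialWeight lam ((j : ℤ), (l : ℤ)) (p, q)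
        = if p = (j:ℤ) then pSum lam l else 0 := by
    intro p _
    have : ∀ q ∈ Finset.Ico (0:ℤ) (l:ℤ), biAxialWeight lam ((j : ℤ), (l : ℤ)) (p, q)
        = if p = (j:ℤ) then cfun lam (q - l) else 0 := by
      intro q hq
      rw [w_eq hlam]
      have hq' : q ≠ (l : ℤ) := by simp at hq; omega
      simp only
      rw [if_neg hq', add_zero]
    rw [Finset.sum_congr rfl this]
    split_ifs with h
    · simp only [if_pos h] at *
      exact Csum l
    · simp
  rw [Finset.sum_congr rfl step, Finset.sum_ite_eq' (Finset.Ico (0:ℤ) (l:ℤ)) (j:ℤ)]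
  rw [if_pos (by simp; omega)]

lemma inner_S (hlam : 1 < lam) (k j : ℕ) (b : ℤ) (hj : j < k) :
    ∑ y ∈ Finset.Ico (0 : ℤ) (k : ℤ) ×ˢ ({b} : Finset ℤ),
        biAxialWeight lam ((j : ℤ), b) y = pSum lam j + pSum lam (k - 1 - j) := by
  rw [Finset.sum_product, ← Rsum hlam j k hj]
  apply Finset.sum_congr rfl
  intro m _
  rw [Finset.sum_singleton, w_eq hlam]
  simp [cfun_zero hlam]

lemma w_symm (x y : ℤ × ℤ) : biAxialWeight lam x y = biAxialWeight lam y x := by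
  unfold biAxialWeight
  have h1 : (x.1 = y.1 ∧ x.2 ≠ y.2) ↔ (y.1 = x.1 ∧ y.2 ≠ x.2) := by
    constructor <;> (rintro ⟨a, b⟩; exact ⟨a.symm, fun h => b h.symm⟩)
  have h2 : (x.2 = y.2 ∧ x.1 ≠ y.1) ↔ (y.2 = x.2 ∧ y.1 ≠ x.1) := by
    constructor <;> (rintro ⟨a, b⟩; exact ⟨a.symm, fun h => b h.symm⟩)
  rw [abs_sub_comm x.2 y.2, abs_sub_comm x.1 y.1]
  exact if_congr h1 rfl (if_congr h2 rfl rfl)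

lemma sum_Ico_int (f : ℤ → ℝ) (n : ℕ) :
    ∑ q ∈ Finset.Ico (0 : ℤ) (n : ℤ), f q = ∑ i ∈ Finset.range n, f (i : ℤ) := by
  induction n with
  | zero => simp
  | succ n ih =>
      rw [Finset.sum_range_succ, ← ih, show ((n + 1 : ℕ) : ℤ) = (n : ℤ) + 1 by push_cast; ring,
        show Finset.Ico (0 : ℤ) ((n : ℤ) + 1) = insert (n : ℤ) (Finset.Ico (0 : ℤ) (n : ℤ)) by
          ext x; simp,
        Finset.sum_insert (by simp)]
      ring

theorem stmt_14 (lam : ℝ) (hlam : 1 < lam) (l k : ℕ)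
    (hl : 2 ≤ l) (hk1 : 1 ≤ k) (hk : k ≤ l - 1) :
    nonlocalPer lam (squareProtP l k) - nonlocalPer lam (squareP l) =
      2 * k * hzeta lam (l + 1) + 2 * ∑ i ∈ Finset.Icc 1 k, hzeta lam i := by
  have hkl : k < l := by omega
  set P := squareP l with hP
  set S := Finset.Ico (0 : ℤ) (k : ℤ) ×ˢ ({(l : ℤ)} : Finset ℤ) with hS
  have hPS : squareProtP l k = P ∪ S := rfl
  have hdisj : Disjoint P S := by
    rw [Finset.disjoint_left]
    intro a haP haS
    rw [hP, squareP, Finset.mem_product] at haP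
    rw [hS, Finset.mem_product] at haS
    have h1 := haP.2
    have h2 := haS.2
    simp at h1 h2
    omega
  have hnl : ∀ Q : Finset (ℤ × ℤ), nonlocalPer lam Q
      = ∑ x ∈ Q, (4 * hzeta lam 1 - ∑ y ∈ Q, biAxialWeight lam x y) :=
    fun Q => Finset.sum_congr rfl fun x _ => tsum_compl_eq hlam Q x
  rw [hPS, hnl, hnl]
  rw [Finset.sum_union hdisj]
  simp only [Finset.sum_union hdisj]
  -- combine the two sums over P
  rw [show
      (∑ x ∈ P, (4 * hzeta lam 1 - (∑ y ∈ P, biAxialWeight lam x y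
          + ∑ y ∈ S, biAxialWeight lam x y))
        + ∑ x ∈ S, (4 * hzeta lam 1 - (∑ y ∈ P, biAxialWeight lam x y
          + ∑ y ∈ S, biAxialWeight lam x y)))
        - ∑ x ∈ P, (4 * hzeta lam 1 - ∑ y ∈ P, biAxialWeight lam x y)
      = ∑ x ∈ S, (4 * hzeta lam 1 - (∑ y ∈ P, biAxialWeight lam x y
          + ∑ y ∈ S, biAxialWeight lam x y))
        - ∑ x ∈ P, ∑ y ∈ S, biAxialWeight lam x y by
    simp only [Finset.sum_sub_distrib, Finset.sum_add_distrib]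
    ring]
  -- cross term: swap to a sum over S
  have hcross : ∑ x ∈ P, ∑ y ∈ S, biAxialWeight lam x y
      = ∑ x ∈ S, ∑ y ∈ P, biAxialWeight lam x y := by
    rw [Finset.sum_comm]
    exact Finset.sum_congr rfl fun x _ => Finset.sum_congr rfl fun y _ => w_symm y x
  rw [hcross, ← Finset.sum_sub_distrib]
  -- now a single sum over S
  have hSsum : ∀ g : ℤ × ℤ → ℝ, ∑ x ∈ S, g x = ∑ j ∈ Finset.range k, g ((j : ℤ), (l : ℤ)) := by
    intro g
    rw [hS, Finset.sum_product]
    rw [sum_Ico_int (fun m => ∑ b ∈ ({(l : ℤ)} : Finset ℤ), g (m, b)) k]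
    exact Finset.sum_congr rfl fun j _ => Finset.sum_singleton _ _
  rw [hSsum]
  have hterm : ∀ j ∈ Finset.range k,
      (4 * hzeta lam 1 - (∑ y ∈ P, biAxialWeight lam ((j : ℤ), (l : ℤ)) y
          + ∑ y ∈ S, biAxialWeight lam ((j : ℤ), (l : ℤ)) y))
        - ∑ y ∈ P, biAxialWeight lam ((j : ℤ), (l : ℤ)) y
      = 2 * hzeta lam (l + 1) + hzeta lam (j + 1) + hzeta lam (k - j) := by
    intro j hj
    rw [Finset.mem_range] at hj
    rw [hP] at *
    rw [inner_P hlam l j (by omega), hS, inner_S hlam k j (l : ℤ) hj]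
    have e1 := hz_one_eq' hlam l
    have e2 := hz_one_eq' hlam j
    have e3 := hz_one_eq' hlam (k - 1 - j)
    rw [show k - 1 - j + 1 = k - j by omega] at e3
    linarith
  rw [Finset.sum_congr rfl hterm]
  rw [Finset.sum_add_distrib, Finset.sum_add_distrib, Finset.sum_const, Finset.card_range, nsmul_eq_mul]
  have hrefl : ∑ j ∈ Finset.range k, hzeta lam (k - j)
      = ∑ j ∈ Finset.range k, hzeta lam (j + 1) := by
    rw [← Finset.sum_range_reflect (fun j => hzeta lam (j + 1)) k]
    exact Finset.sum_congr rfl fun j hj => by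
      rw [Finset.mem_range] at hj
      congr 1
      omega
  have hicc : ∑ j ∈ Finset.range k, hzeta lam (j + 1) = ∑ i ∈ Finset.Icc 1 k, hzeta lam i := by
    rw [show Finset.Icc 1 k = Finset.Ico 1 (k + 1) by ext x; simp,
      Finset.sum_Ico_eq_sum_range]
    simp only [add_tsub_cancel_right]
    exact Finset.sum_congr rfl fun j _ => by rw [add_comm]
  rw [hrefl, hicc]
  ring
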